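/- Let T > 0, a, b, k > 0, and let f : [0,T] → ℝ be a non-negative integrable function satisfying f(t) ≤ a + b·k·∫₀ᵗ f(s)/√(t−s) ds for all 0 ≤ t ≤ T. Then for all 0 ≤ t ≤ T, f(t) ≤ (a + 2·a·b·k·√T)·exp(π·b²·k²·t). -/

import Mathlib

set_option maxHeartbeats 1000000

open MeasureTheory Real Set intervalIntegral ENNReal Topology Filter


lemma rpow_half_eq {x : ℝ} (hx : 0 ≤ x) : x ^ (-(1/2) : ℝ) = (Real.sqrt x)⁻¹ := by
  rw [Real.rpow_neg hx, Real.sqrt_eq_rpow]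

lemma sqrtInv_intInt_right {c d : ℝ} (hcd : c ≤ d) :
    IntervalIntegrable (fun s => (Real.sqrt (s - c))⁻¹) volume c d := by
  have h : IntervalIntegrable (fun x : ℝ => x ^ (-(1/2) : ℝ)) volume 0 (d - c) :=
    intervalIntegrable_rpow' (by norm_num)
  have h2 := h.comp_sub_right c
  rw [zero_add, show d - c + c = d by ring] at h2
  rw [intervalIntegrable_iff_integrableOn_Ioc_of_le (by linarith)] at h2 ⊢
  apply h2.congr_fun ?_ measurableSet_Ioc
  intro x hx
  exact rpow_half_eq (by linarith [hx.1])

lemma sqrtInv_intInt_left {c d : ℝ} (hcd : c ≤ d) :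
    IntervalIntegrable (fun s => (Real.sqrt (d - s))⁻¹) volume c d := by
  have h : IntervalIntegrable (fun x : ℝ => x ^ (-(1/2) : ℝ)) volume 0 (d - c) :=
    intervalIntegrable_rpow' (by norm_num)
  have h2 := (h.comp_sub_left d).symm
  rw [show d - (d - c) = c by ring, sub_zero] at h2
  rw [intervalIntegrable_iff_integrableOn_Ioc_of_le (by linarith)] at h2 ⊢
  apply h2.congr_fun ?_ measurableSet_Ioc
  intro x hx
  exact rpow_half_eq (by linarith [hx.2])

lemma beta_integrable {u t : ℝ} (hut : u < t) :
    IntegrableOn (fun s => (Real.sqrt (s - u))⁻¹ * (Real.sqrt (t - s))⁻¹) (Ioc u t) := by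
  set m := (u + t)/2 with hm
  have hum : u < m := by rw [hm]; linarith
  have hmt : m < t := by rw [hm]; linarith
  have hmeas : Measurable (fun s : ℝ => (Real.sqrt (s - u))⁻¹ * (Real.sqrt (t - s))⁻¹) :=
    ((Real.continuous_sqrt.comp (continuous_id.sub continuous_const)).measurable.inv).mul
      ((Real.continuous_sqrt.comp (continuous_const.sub continuous_id)).measurable.inv)
  rw [show Ioc u t = Ioc u m ∪ Ioc m t from (Set.Ioc_union_Ioc_eq_Ioc hum.le hmt.le).symm]
  apply IntegrableOn.union
  · have hInt : IntegrableOn (fun s => (Real.sqrt (s - u))⁻¹ * (Real.sqrt (t - m))⁻¹) (Ioc u m) :=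
      ((intervalIntegrable_iff_integrableOn_Ioc_of_le hum.le).1
        (sqrtInv_intInt_right hum.le)).mul_const _
    apply hInt.mono' hmeas.aestronglyMeasurable
    filter_upwards [ae_restrict_mem measurableSet_Ioc] with s hs
    have h1 : 0 < Real.sqrt (s - u) := Real.sqrt_pos.2 (by linarith [hs.1])
    have h2 : 0 < Real.sqrt (t - m) := Real.sqrt_pos.2 (by linarith)
    have h3 : Real.sqrt (t - m) ≤ Real.sqrt (t - s) := Real.sqrt_le_sqrt (by linarith [hs.2])
    rw [Real.norm_eq_abs, abs_of_nonneg (by positivity)]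
    gcongr
  · have hInt : IntegrableOn (fun s => (Real.sqrt (m - u))⁻¹ * (Real.sqrt (t - s))⁻¹) (Ioc m t) :=
      ((intervalIntegrable_iff_integrableOn_Ioc_of_le hmt.le).1
        (sqrtInv_intInt_left hmt.le)).const_mul _
    apply hInt.mono' hmeas.aestronglyMeasurable
    filter_upwards [ae_restrict_mem measurableSet_Ioc] with s hs
    have h2 : 0 < Real.sqrt (m - u) := Real.sqrt_pos.2 (by linarith)
    have h3 : Real.sqrt (m - u) ≤ Real.sqrt (s - u) := Real.sqrt_le_sqrt (by linarith [hs.1])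
    rw [Real.norm_eq_abs, abs_of_nonneg (by positivity)]
    gcongr

lemma beta_value {u t : ℝ} (hut : u < t) :
    ∫ s in u..t, (Real.sqrt (s - u))⁻¹ * (Real.sqrt (t - s))⁻¹ = Real.pi := by
  have htu : (0:ℝ) < t - u := by linarith
  set G : ℝ → ℝ := fun s => Real.arcsin ((2*s - (u+t))/(t-u)) with hG
  have hderiv : ∀ s ∈ Ioo u t,
      HasDerivAt G ((Real.sqrt (s - u))⁻¹ * (Real.sqrt (t - s))⁻¹) s := by
    intro s hs
    have hsu : 0 < s - u := by linarith [hs.1]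
    have hts : 0 < t - s := by linarith [hs.2]
    set x := (2*s - (u+t))/(t-u) with hx
    have hx1 : -1 < x := by rw [hx, lt_div_iff₀ htu]; linarith
    have hx2 : x < 1 := by rw [hx, div_lt_iff₀ htu]; linarith
    have hX : HasDerivAt (fun s : ℝ => (2*s - (u+t))/(t-u)) (2/(t-u)) s := by
      simpa using (((hasDerivAt_id s).const_mul 2).sub_const (u+t)).div_const (t-u)
    have harc := (Real.hasDerivAt_arcsin (ne_of_gt hx1) (ne_of_lt hx2)).comp s hX
    have heq : (1 / Real.sqrt (1 - x^2)) * (2/(t-u))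
        = (Real.sqrt (s - u))⁻¹ * (Real.sqrt (t - s))⁻¹ := by
      have hsq : Real.sqrt (1 - x^2) = 2 * Real.sqrt (t-s) * Real.sqrt (s-u) / (t-u) := by
        have h1 : 1 - x^2 = (2 * Real.sqrt (t-s) * Real.sqrt (s-u) / (t-u))^2 := by
          have key : (2 * Real.sqrt (t-s) * Real.sqrt (s-u))^2 = 4*((t-s)*(s-u)) := by
            rw [mul_pow, mul_pow, Real.sq_sqrt hts.le, Real.sq_sqrt hsu.le]; ring
          rw [hx, div_pow, div_pow, key]
          field_simp
          ring
        rw [h1, Real.sqrt_sq (by positivity)]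
      have e1 : Real.sqrt (t-s) ≠ 0 := by positivity
      have e2 : Real.sqrt (s-u) ≠ 0 := by positivity
      rw [hsq]
      field_simp
    rw [← heq]
    exact harc
  have hint : IntervalIntegrable (fun s => (Real.sqrt (s - u))⁻¹ * (Real.sqrt (t - s))⁻¹)
      volume u t := by
    rw [intervalIntegrable_iff_integrableOn_Ioc_of_le hut.le]; exact beta_integrable hut
  have hcont : ContinuousOn G (Icc u t) :=
    (Real.continuous_arcsin.comp (by continuity)).continuousOn
  rw [integral_eq_sub_of_hasDeriv_right_of_le hut.le hcont
      (fun s hs => (hderiv s hs).hasDerivWithinAt) hint]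
  have hGt : G t = Real.pi/2 := by
    rw [hG]
    simp only
    rw [show (2*t - (u+t))/(t-u) = 1 by rw [show 2*t-(u+t) = t-u by ring, div_self htu.ne']]
    exact Real.arcsin_one
  have hGu : G u = -(Real.pi/2) := by
    rw [hG]
    simp only
    rw [show (2*u - (u+t))/(t-u) = -1 by rw [show 2*u-(u+t) = -(t-u) by ring, neg_div,
      div_self htu.ne']]
    exact Real.arcsin_neg_one
  rw [hGt, hGu]; ring

lemma sqrtInv_integral {t : ℝ} (ht : 0 ≤ t) :
    ∫ s in (0:ℝ)..t, (Real.sqrt (t - s))⁻¹ = 2 * Real.sqrt t := by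
  rw [intervalIntegral.integral_comp_sub_left (fun s => (Real.sqrt s)⁻¹) t]
  rw [sub_self, sub_zero]
  rw [show (∫ x in (0:ℝ)..t, (Real.sqrt x)⁻¹) = ∫ x in (0:ℝ)..t, x ^ (-(1/2) : ℝ) from
    intervalIntegral.integral_congr fun x hx => by
      rw [Set.uIcc_of_le ht] at hx
      exact (rpow_half_eq hx.1).symm]
  rw [integral_rpow (Or.inl (by norm_num))]
  rw [Real.zero_rpow (by norm_num), Real.sqrt_eq_rpow]
  norm_num
  ring

lemma E2_aux (T a b k : ℝ) (hT : 0 < T) (ha : 0 < a) (hb : 0 < b) (hk : 0 < k)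
    (f : ℝ → ℝ)
    (hint : IntegrableOn f (Set.Icc 0 T) volume)
    (hnonneg : ∀ t ∈ Set.Icc (0:ℝ) T, 0 ≤ f t)
    (hineq : ∀ t ∈ Set.Icc (0:ℝ) T,
      f t ≤ a + b * k * ∫ s in (0:ℝ)..t, f s / Real.sqrt (t - s)) :
    ∀ t ∈ Set.Icc (0:ℝ) T,
      f t ≤ a + 2*a*b*k*Real.sqrt t + (Real.pi * b^2 * k^2) * ∫ u in (0:ℝ)..t, f u := by
  obtain ⟨g, hg_meas, hfg⟩ := hint.aestronglyMeasurable.aemeasurable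
  set F : ℝ → ℝ≥0∞ := fun u => ENNReal.ofReal (g u) with hFdef
  have hF_meas : Measurable F := ENNReal.measurable_ofReal.comp hg_meas
  set q : ℝ → ℝ → ℝ≥0∞ := fun t s => ENNReal.ofReal ((Real.sqrt (t - s))⁻¹) with hqdef
  have hq_meas : ∀ t, Measurable (q t) := fun t =>
    ENNReal.measurable_ofReal.comp ((Real.continuous_sqrt.comp
      (continuous_const.sub continuous_id)).measurable.inv)
  have hq_zero : ∀ t s : ℝ, t ≤ s → q t s = 0 := by
    intro t s h
    have h0 : Real.sqrt (t - s) = 0 := Real.sqrt_eq_zero'.2 (by linarith)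
    simp only [hqdef, h0, _root_.inv_zero, ENNReal.ofReal_zero]
  set Lam : ℝ → ℝ≥0∞ := fun s => ∫⁻ u in Ioc 0 s, F u * q s u with hLamdef
  set I : ℝ → ℝ≥0∞ := fun t => ∫⁻ u in Ioc 0 t, F u with hIdef
  have hsub : ∀ s : ℝ, s ≤ T → Ioc (0:ℝ) s ⊆ Icc (0:ℝ) T := fun s hsT =>
    Set.Ioc_subset_Icc_self.trans (Set.Icc_subset_Icc le_rfl hsT)
  have hFf : ∀ s : ℝ, 0 ≤ s → s ≤ T →
      (∀ᵐ u ∂(volume.restrict (Ioc 0 s)), ENNReal.ofReal (f u) = F u) := by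
    intro s h0 hsT
    apply ae_restrict_of_ae_restrict_of_subset (hsub s hsT)
    exact hfg.mono fun u hu => by rw [hFdef]; exact congrArg _ hu
  have hfm : ∀ s : ℝ, s ≤ T → AEStronglyMeasurable f (volume.restrict (Ioc 0 s)) := by
    intro s hsT
    exact hint.aestronglyMeasurable.mono_measure
      (Measure.restrict_mono (hsub s hsT) le_rfl)
  have hJ : ∀ s ∈ Icc (0:ℝ) T,
      (∫ u in (0:ℝ)..s, f u / Real.sqrt (s - u)) = (Lam s).toReal := by
    intro s hs
    rw [intervalIntegral.integral_of_le hs.1]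
    have hmeasf : AEStronglyMeasurable (fun u => f u / Real.sqrt (s - u))
        (volume.restrict (Ioc 0 s)) := by
      have m : Measurable fun u : ℝ => (Real.sqrt (s - u))⁻¹ :=
        (Real.continuous_sqrt.comp (continuous_const.sub continuous_id)).measurable.inv
      simp only [div_eq_mul_inv]
      exact (hfm s hs.2).mul m.aestronglyMeasurable
    have hnn : 0 ≤ᵐ[volume.restrict (Ioc 0 s)] fun u => f u / Real.sqrt (s - u) := by
      filter_upwards [ae_restrict_mem measurableSet_Ioc] with u hu
      exact div_nonneg (hnonneg u (hsub s hs.2 hu)) (Real.sqrt_nonneg _)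
    rw [MeasureTheory.integral_eq_lintegral_of_nonneg_ae hnn hmeasf]
    congr 1
    apply lintegral_congr_ae
    filter_upwards [hFf s hs.1 hs.2, ae_restrict_mem measurableSet_Ioc] with u hFu hu
    rw [div_eq_mul_inv, ENNReal.ofReal_mul (hnonneg u (hsub s hs.2 hu)), hFu]
  have hE1 : ∀ t ∈ Icc (0:ℝ) T, ∀ᵐ s ∂(volume.restrict (Ioc 0 t)),
      F s ≤ ENNReal.ofReal a + ENNReal.ofReal (b*k) * Lam s := by
    intro t ht
    filter_upwards [hFf t ht.1 ht.2, ae_restrict_mem measurableSet_Ioc] with s hFs hsmem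
    have hsT : s ∈ Icc (0:ℝ) T := hsub t ht.2 hsmem
    have h1 := hineq s hsT
    rw [hJ s hsT] at h1
    calc F s = ENNReal.ofReal (f s) := hFs.symm
      _ ≤ ENNReal.ofReal (a + b*k*(Lam s).toReal) := ENNReal.ofReal_le_ofReal h1
      _ ≤ ENNReal.ofReal a + ENNReal.ofReal (b*k*(Lam s).toReal) := ENNReal.ofReal_add_le
      _ = ENNReal.ofReal a + ENNReal.ofReal (b*k) * ENNReal.ofReal ((Lam s).toReal) := by
          rw [ENNReal.ofReal_mul (by positivity)]
      _ ≤ ENNReal.ofReal a + ENNReal.ofReal (b*k) * Lam s := by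
          gcongr
          exact ENNReal.ofReal_toReal_le
  have hqint : ∀ t : ℝ, 0 ≤ t → ∫⁻ s in Ioc 0 t, q t s = ENNReal.ofReal (2 * Real.sqrt t) := by
    intro t ht
    have hIOn : IntegrableOn (fun s => (Real.sqrt (t - s))⁻¹) (Ioc 0 t) volume :=
      (intervalIntegrable_iff_integrableOn_Ioc_of_le ht).1 (sqrtInv_intInt_left ht)
    rw [← MeasureTheory.ofReal_integral_eq_lintegral_ofReal hIOn
      (ae_of_all _ fun s => by positivity)]
    rw [← intervalIntegral.integral_of_le ht, sqrtInv_integral ht]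
  have hbeta : ∀ t ∈ Icc (0:ℝ) T, ∀ u ∈ Ioc (0:ℝ) t,
      (∫⁻ s in Ioc 0 t, q s u * q t s) ≤ ENNReal.ofReal Real.pi := by
    intro t ht u hu
    rw [show Ioc (0:ℝ) t = Ioc 0 u ∪ Ioc u t from (Set.Ioc_union_Ioc_eq_Ioc hu.1.le hu.2).symm,
       lintegral_union measurableSet_Ioc (Set.Ioc_disjoint_Ioc_of_le le_rfl)]
    have h1 : ∫⁻ s in Ioc (0:ℝ) u, q s u * q t s = 0 := by
      rw [setLIntegral_congr_fun_ae measurableSet_Ioc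
        (ae_of_all _ fun s (hs : s ∈ Ioc (0:ℝ) u) => by rw [hq_zero s u hs.2, zero_mul]),
        lintegral_zero]
    rw [h1, zero_add]
    rcases eq_or_lt_of_le hu.2 with heq | hlt
    · rw [heq, Set.Ioc_self, Measure.restrict_empty, lintegral_zero_measure]
      exact zero_le
    · have key : ∫⁻ s in Ioc u t, q s u * q t s = ENNReal.ofReal Real.pi := by
        have hmul : ∀ s, q s u * q t s
            = ENNReal.ofReal ((Real.sqrt (s-u))⁻¹ * (Real.sqrt (t-s))⁻¹) := by
          intro s; rw [ENNReal.ofReal_mul (by positivity)]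
        simp_rw [hmul]
        rw [← MeasureTheory.ofReal_integral_eq_lintegral_ofReal (beta_integrable hlt)
          (ae_of_all _ fun s => by positivity)]
        rw [← intervalIntegral.integral_of_le hlt.le, beta_value hlt]
      rw [key]
  have hIfin : ∀ t ∈ Icc (0:ℝ) T, I t ≠ ⊤ := by
    intro t ht
    have h1 : I t ≤ ∫⁻ u in Icc 0 T, F u :=
      lintegral_mono' (Measure.restrict_mono (hsub t ht.2) le_rfl) le_rfl
    have h2 : ∫⁻ u in Icc 0 T, F u = ∫⁻ u in Icc 0 T, ENNReal.ofReal (f u) :=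
      lintegral_congr_ae (hfg.mono fun u hu => by rw [hFdef]; exact (congrArg _ hu).symm)
    exact ne_of_lt (lt_of_le_of_lt (h1.trans h2.le) hint.lintegral_lt_top)
  have hψ : ∀ t ∈ Icc (0:ℝ) T, ∫ u in (0:ℝ)..t, f u = (I t).toReal := by
    intro t ht
    rw [intervalIntegral.integral_of_le ht.1]
    have hnn : 0 ≤ᵐ[volume.restrict (Ioc 0 t)] f := by
      filter_upwards [ae_restrict_mem measurableSet_Ioc] with u hu
      exact hnonneg u (hsub t ht.2 hu)
    rw [MeasureTheory.integral_eq_lintegral_of_nonneg_ae hnn (hfm t ht.2)]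
    congr 1
    exact lintegral_congr_ae ((hFf t ht.1 ht.2).mono fun u hu => hu)
  -- main argument
  intro t ht
  rcases eq_or_lt_of_le ht.1 with h0 | h0
  · rw [← h0]
    simp only [intervalIntegral.integral_same, Real.sqrt_zero, mul_zero, add_zero]
    have := hineq 0 ⟨le_rfl, hT.le⟩
    simpa using this
  · have hdouble : ∫⁻ s in Ioc 0 t, Lam s * q t s ≤ ENNReal.ofReal Real.pi * I t := by
      have hext : ∀ s ∈ Ioc (0:ℝ) t, Lam s * q t s
          = ∫⁻ u in Ioc 0 t, F u * q s u * q t s := by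
        intro s hs
        have hL : Lam s = ∫⁻ u in Ioc 0 t, F u * q s u := by
          rw [show Ioc (0:ℝ) t = Ioc 0 s ∪ Ioc s t from
            (Set.Ioc_union_Ioc_eq_Ioc hs.1.le hs.2).symm,
            lintegral_union measurableSet_Ioc (Set.Ioc_disjoint_Ioc_of_le le_rfl)]
          have h0' : ∫⁻ u in Ioc s t, F u * q s u = 0 := by
            rw [setLIntegral_congr_fun_ae measurableSet_Ioc
              (ae_of_all _ fun u (hu : u ∈ Ioc s t) => by rw [hq_zero s u hu.1.le, mul_zero]),
              lintegral_zero]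
          rw [h0', add_zero]
        rw [hL, ← lintegral_mul_const' _ _ ENNReal.ofReal_ne_top]
      calc ∫⁻ s in Ioc 0 t, Lam s * q t s
          = ∫⁻ s in Ioc 0 t, ∫⁻ u in Ioc 0 t, F u * q s u * q t s :=
            setLIntegral_congr_fun_ae measurableSet_Ioc (ae_of_all _ hext)
        _ = ∫⁻ u in Ioc 0 t, ∫⁻ s in Ioc 0 t, F u * q s u * q t s := by
            apply lintegral_lintegral_swap
            apply Measurable.aemeasurable
            show Measurable fun p : ℝ × ℝ => F p.2 * q p.1 p.2 * q t p.1
            exact ((hF_meas.comp measurable_snd).mul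
              (ENNReal.measurable_ofReal.comp (((Real.continuous_sqrt.comp
                (continuous_fst.sub continuous_snd)).measurable).inv))).mul
              ((hq_meas t).comp measurable_fst)
        _ ≤ ∫⁻ u in Ioc 0 t, F u * ENNReal.ofReal Real.pi := by
            apply lintegral_mono_ae
            filter_upwards [ae_restrict_mem measurableSet_Ioc] with u hu
            calc ∫⁻ s in Ioc 0 t, F u * q s u * q t s
                = F u * ∫⁻ s in Ioc 0 t, q s u * q t s := by
                  simp_rw [mul_assoc]
                  exact lintegral_const_mul' _ _ ENNReal.ofReal_ne_top
              _ ≤ F u * ENNReal.ofReal Real.pi := mul_le_mul_right (hbeta t ht u hu) _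
        _ = ENNReal.ofReal Real.pi * I t := by
            rw [lintegral_mul_const' _ _ ENNReal.ofReal_ne_top, mul_comm]
    have hLt : Lam t ≤ ENNReal.ofReal a * ENNReal.ofReal (2*Real.sqrt t)
        + ENNReal.ofReal (b*k) * (ENNReal.ofReal Real.pi * I t) := by
      calc Lam t ≤ ∫⁻ s in Ioc 0 t, (ENNReal.ofReal a + ENNReal.ofReal (b*k) * Lam s) * q t s := by
            apply lintegral_mono_ae
            filter_upwards [hE1 t ht] with s hs
            exact mul_le_mul_left hs _
        _ = ∫⁻ s in Ioc 0 t, (ENNReal.ofReal a * q t s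
              + ENNReal.ofReal (b*k) * (Lam s * q t s)) :=
            lintegral_congr fun s => by rw [add_mul, mul_assoc]
        _ = ENNReal.ofReal a * (∫⁻ s in Ioc 0 t, q t s)
              + ENNReal.ofReal (b*k) * ∫⁻ s in Ioc 0 t, Lam s * q t s := by
            rw [lintegral_add_left' (f := fun s => ENNReal.ofReal a * q t s) ((measurable_const.mul (hq_meas t)).aemeasurable),
              lintegral_const_mul' _ _ ENNReal.ofReal_ne_top,
              lintegral_const_mul' _ _ ENNReal.ofReal_ne_top]
        _ ≤ ENNReal.ofReal a * ENNReal.ofReal (2*Real.sqrt t)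
              + ENNReal.ofReal (b*k) * (ENNReal.ofReal Real.pi * I t) := by
            rw [hqint t ht.1]
            exact add_le_add le_rfl (mul_le_mul_right hdouble _)
    have h1 := hineq t ht
    rw [hJ t ht] at h1
    have hfin1 : ENNReal.ofReal Real.pi * I t ≠ ⊤ :=
      ENNReal.mul_ne_top ENNReal.ofReal_ne_top (hIfin t ht)
    have hfin2 : ENNReal.ofReal (b*k) * (ENNReal.ofReal Real.pi * I t) ≠ ⊤ :=
      ENNReal.mul_ne_top ENNReal.ofReal_ne_top hfin1
    have hfin3 : ENNReal.ofReal a * ENNReal.ofReal (2*Real.sqrt t) ≠ ⊤ :=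
      ENNReal.mul_ne_top ENNReal.ofReal_ne_top ENNReal.ofReal_ne_top
    have h2 : (Lam t).toReal ≤ a * (2*Real.sqrt t) + (b*k) * (Real.pi * (I t).toReal) := by
      have h3 := ENNReal.toReal_mono (by exact ENNReal.add_ne_top.2 ⟨hfin3, hfin2⟩) hLt
      rwa [ENNReal.toReal_add hfin3 hfin2, ENNReal.toReal_mul, ENNReal.toReal_mul,
        ENNReal.toReal_mul, ENNReal.toReal_ofReal ha.le,
        ENNReal.toReal_ofReal (by positivity), ENNReal.toReal_ofReal (by positivity),
        ENNReal.toReal_ofReal Real.pi_pos.le] at h3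
    rw [hψ t ht]
    calc f t ≤ a + b*k*(Lam t).toReal := h1
      _ ≤ a + b*k*(a*(2*Real.sqrt t) + (b*k)*(Real.pi*(I t).toReal)) := by
          have hbk : 0 ≤ b*k := by positivity
          nlinarith [h2]
      _ = a + 2*a*b*k*Real.sqrt t + (Real.pi * b^2 * k^2)*(I t).toReal := by ring

theorem stmt_4 (T a b k : ℝ) (hT : 0 < T) (ha : 0 < a) (hb : 0 < b) (hk : 0 < k)
    (f : ℝ → ℝ)
    (hint : IntegrableOn f (Set.Icc 0 T) volume)
    (hnonneg : ∀ t ∈ Set.Icc (0:ℝ) T, 0 ≤ f t)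
    (hineq : ∀ t ∈ Set.Icc (0:ℝ) T,
      f t ≤ a + b * k * ∫ s in (0:ℝ)..t, f s / Real.sqrt (t - s)) :
    ∀ t ∈ Set.Icc (0:ℝ) T,
      f t ≤ (a + 2 * a * b * k * Real.sqrt T) * Real.exp (Real.pi * b ^ 2 * k ^ 2 * t) := by
  have hE2 := E2_aux T a b k hT ha hb hk f hint hnonneg hineq
  intro t ht
  set C : ℝ := Real.pi * b^2 * k^2 with hC
  set M : ℝ := a + 2*a*b*k*Real.sqrt T with hM
  have hC0 : 0 < C := by rw [hC]; positivity
  have hM0 : 0 < M := by rw [hM]; positivity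
  set ψ : ℝ → ℝ := fun x => ∫ u in (0:ℝ)..x, f u with hψdef
  have hE2' : ∀ u ∈ Icc (0:ℝ) T, f u ≤ a + 2*a*b*k*Real.sqrt u + C * ψ u := hE2
  have hsubIcc : ∀ x : ℝ, x ∈ Icc (0:ℝ) T → Icc (0:ℝ) x ⊆ Icc 0 T :=
    fun x hx => Icc_subset_Icc le_rfl hx.2
  have hψcont : ContinuousOn ψ (Icc 0 T) := by
    have h := intervalIntegral.continuousOn_primitive_interval
      (μ := volume) (a := 0) (b := T) (f := f) ?_
    · rwa [uIcc_of_le hT.le] at h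
    · rwa [uIcc_of_le hT.le]
  have hψnn : ∀ x ∈ Icc (0:ℝ) T, 0 ≤ ψ x := fun x hx =>
    intervalIntegral.integral_nonneg hx.1 (fun u hu => hnonneg u (hsubIcc x hx hu))
  have hψii : ∀ x ∈ Icc (0:ℝ) T, IntervalIntegrable ψ volume 0 x := by
    intro x hx
    apply ContinuousOn.intervalIntegrable
    rw [uIcc_of_le hx.1]
    exact hψcont.mono (hsubIcc x hx)
  have hfii : ∀ x ∈ Icc (0:ℝ) T, IntervalIntegrable f volume 0 x := by
    intro x hx
    rw [intervalIntegrable_iff_integrableOn_Ioc_of_le hx.1]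
    exact hint.mono_set (Ioc_subset_Icc_self.trans (hsubIcc x hx))
  have hsqT : ∀ u ∈ Icc (0:ℝ) T, a + 2*a*b*k*Real.sqrt u ≤ M := by
    intro u hu
    rw [hM]
    gcongr
    exact hu.2
  have hfE : ∀ u ∈ Icc (0:ℝ) T, f u ≤ M + C * ψ u := by
    intro u hu
    have h := hE2' u hu
    have h2 := hsqT u hu
    linarith
  set χ : ℝ → ℝ := fun x => ∫ u in (0:ℝ)..x, ψ u with hχdef
  have hχ0 : χ 0 = 0 := intervalIntegral.integral_same
  have hψle : ∀ x ∈ Icc (0:ℝ) T, ψ x ≤ M * x + C * χ x := by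
    intro x hx
    have h1 : ψ x ≤ ∫ u in (0:ℝ)..x, (M + C * ψ u) := by
      apply intervalIntegral.integral_mono_on hx.1 (hfii x hx)
        (intervalIntegrable_const.add ((hψii x hx).const_mul C))
      intro u hu
      exact hfE u (hsubIcc x hx hu)
    have h2 : (∫ u in (0:ℝ)..x, (M + C * ψ u)) = M * x + C * χ x := by
      rw [intervalIntegral.integral_add intervalIntegrable_const ((hψii x hx).const_mul C),
        intervalIntegral.integral_const, intervalIntegral.integral_const_mul]
      simp only [smul_eq_mul, sub_zero]
      ring
    linarith
  set y : ℝ → ℝ := fun x => χ x + (M/C)*x + M/C^2 with hydef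
  have hy_eq : ∀ x, y x = χ x + (M/C)*x + M/C^2 := fun _ => rfl
  have hχcont : ContinuousOn χ (Icc 0 T) := by
    have h := intervalIntegral.continuousOn_primitive_interval
      (μ := volume) (a := 0) (b := T) (f := ψ) ?_
    · rwa [uIcc_of_le hT.le] at h
    · rw [uIcc_of_le hT.le]; exact hψcont.integrableOn_Icc
  have hycont : ContinuousOn y (Icc 0 T) := by
    apply ContinuousOn.add
    apply ContinuousOn.add hχcont
    · exact (continuous_const.mul continuous_id).continuousOn
    · exact continuousOn_const
  have hχnn : ∀ x ∈ Icc (0:ℝ) T, 0 ≤ χ x := fun x hx =>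
    intervalIntegral.integral_nonneg hx.1 (fun u hu => hψnn u (hsubIcc x hx hu))
  have hyderiv : ∀ x ∈ Ico (0:ℝ) T, HasDerivWithinAt y (ψ x + M/C) (Ici x) x := by
    intro x hx
    have hx' : x ∈ Icc (0:ℝ) T := Ico_subset_Icc_self hx
    have hxm : Icc (0:ℝ) T ∈ 𝓝[Ici x] x := by
      rw [mem_nhdsWithin]
      exact ⟨Iio T, isOpen_Iio, hx.2, fun u hu => ⟨hx.1.trans hu.2, hu.1.le⟩⟩
    have hχd : HasDerivWithinAt χ (ψ x) (Ici x) x := by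
      have hxm' : Icc (0:ℝ) T ∈ 𝓝[Ioi x] x := nhdsWithin_mono x Ioi_subset_Ici_self hxm
      have hmeasAt : StronglyMeasurableAtFilter ψ (𝓝[Ioi x] x) volume :=
        ⟨Icc 0 T, hxm', hψcont.aestronglyMeasurable measurableSet_Icc⟩
      exact intervalIntegral.integral_hasDerivWithinAt_right (hψii x hx') hmeasAt
        ((hψcont x hx').mono_of_mem_nhdsWithin hxm')
    have hlin : HasDerivWithinAt (fun x : ℝ => (M/C)*x + M/C^2) (M/C) (Ici x) x := by
      simpa using (((hasDerivAt_id x).const_mul (M/C)).add_const (M/C^2)).hasDerivWithinAt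
    have := hχd.add hlin
    simpa [hydef, add_assoc, Pi.add_def] using this
  have hy0 : ‖y 0‖ ≤ M/C^2 := by
    have hy0' : y 0 = M/C^2 := by rw [hy_eq 0, hχ0]; ring
    rw [hy0', Real.norm_of_nonneg (by positivity)]
  clear_value C M ψ χ y
  have hbound : ∀ x ∈ Ico (0:ℝ) T, ‖ψ x + M/C‖ ≤ C * ‖y x‖ + 0 := by
    intro x hx
    have hx' : x ∈ Icc (0:ℝ) T := Ico_subset_Icc_self hx
    have h1 : 0 ≤ ψ x := hψnn x hx'
    have h2 : 0 ≤ y x := by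
      have h3 := hχnn x hx'
      have h4 := hx'.1
      rw [hy_eq x]
      positivity
    rw [Real.norm_of_nonneg (by positivity), Real.norm_of_nonneg h2]
    have h5 := hψle x hx'
    have e1 : C*((M/C)*x) = M*x := by field_simp
    have e2 : C*(M/C^2) = M/C := by rw [pow_two]; field_simp
    have h6 : C * y x = C*χ x + M*x + M/C := by
      rw [hy_eq x, mul_add, mul_add, e1, e2]
    linarith
  have hg := norm_le_gronwallBound_of_norm_deriv_right_le hycont hyderiv hy0 hbound t ht
  rw [gronwallBound_ε0, sub_zero] at hg
  have hyb : y t ≤ M/C^2 * Real.exp (C*t) := (le_abs_self _).trans hg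
  have hψt : ψ t ≤ M*t + C*χ t := hψle t ht
  have hχt : χ t = y t - (M/C)*t - M/C^2 := by rw [hy_eq t]; ring
  have hfE2 : f t ≤ a + 2*a*b*k*Real.sqrt t + C * ψ t := hE2' t ht
  have hAa : a + 2*a*b*k*Real.sqrt t ≤ M := hsqT t ht
  show f t ≤ M * Real.exp (C * t)
  have hCψ : C * ψ t ≤ C * (M*t + C*χ t) := by
    exact mul_le_mul_of_nonneg_left hψt hC0.le
  have hCχ : C^2 * χ t ≤ C^2 * (M/C^2 * Real.exp (C*t) - (M/C)*t - M/C^2) := by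
    apply mul_le_mul_of_nonneg_left _ (by positivity)
    rw [hχt]
    linarith [hyb]
  have e3 : C^2 * (M/C^2 * Real.exp (C*t) - (M/C)*t - M/C^2)
      = M * Real.exp (C*t) - C*M*t - M := by
    field_simp
  have e4 : C * (M*t + C*χ t) = C*M*t + C^2*χ t := by ring
  linarith
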